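/- Let g : [0,1] → [0,1] be weakly increasing, right-continuous, with g(x) ≥ x for all x. Define W_g⁻(x) = λ{y ∈ [0,1] : g(y) < x}, where λ is Lebesgue measure. Then for all x, t ∈ [0,1]: W_g⁻(x) ≤ t if and only if g(t) ≥ x. -/

import Mathlib

open MeasureTheory

/-- For `g : [0,1] → [0,1]` weakly increasing, right-continuous, with `g(x) ≥ x`,
and `W_g⁻(x) = λ{y ∈ [0,1] : g(y) < x}`:  `W_g⁻(x) ≤ t ↔ g(t) ≥ x`
for all `x, t ∈ [0,1]`. -/
theorem Wgminus_le_iff (g : ℝ → ℝ)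
    (hmono : MonotoneOn g (Set.Icc (0:ℝ) 1))
    (hrc : ∀ x ∈ Set.Ico (0:ℝ) 1, ContinuousWithinAt g (Set.Ici x) x)
    (hmem : ∀ x ∈ Set.Icc (0:ℝ) 1, g x ∈ Set.Icc (0:ℝ) 1)
    (hge : ∀ x ∈ Set.Icc (0:ℝ) 1, x ≤ g x) :
    ∀ x ∈ Set.Icc (0:ℝ) 1, ∀ t ∈ Set.Icc (0:ℝ) 1,
      ((volume {y ∈ Set.Icc (0:ℝ) 1 | g y < x}).toReal ≤ t ↔ x ≤ g t) := by
  intro x hx t ht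
  set S : Set ℝ := {y ∈ Set.Icc (0:ℝ) 1 | g y < x} with hSdef
  have hSsub : S ⊆ Set.Icc (0:ℝ) 1 := fun y hy => hy.1
  have hfin : volume S ≠ ⊤ := by
    refine ne_top_of_le_ne_top ?_ (measure_mono hSsub)
    simp [Real.volume_Icc]
  constructor
  · intro hle
    by_contra hgt
    push_neg at hgt
    have ht1 : t < 1 := by
      rcases lt_or_eq_of_le ht.2 with h | h
      · exact h
      · exfalso
        have h1 := hge t ht
        linarith [hx.2]
    have hcw : ContinuousWithinAt g (Set.Ici t) t := hrc t ⟨ht.1, ht1⟩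
    have hev : ∀ᶠ y in nhdsWithin t (Set.Ici t), g y < x :=
      hcw.eventually_lt_const hgt
    rcases mem_nhdsGE_iff_exists_Ico_subset.mp hev with ⟨u, hu, hsub⟩
    have hu' : t < u := hu
    set v : ℝ := min u 1 with hv
    have htv : t < v := lt_min hu' ht1
    have hsub' : Set.Ico (0:ℝ) v ⊆ S := by
      intro y hy
      have hy0 : (0:ℝ) ≤ y := hy.1
      have hy1 : y ≤ 1 := le_of_lt (lt_of_lt_of_le hy.2 (min_le_right u 1))
      refine ⟨⟨hy0, hy1⟩, ?_⟩
      rcases lt_or_ge y t with h | h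
      · have hgy : g y ≤ g t := hmono ⟨hy0, hy1⟩ ht h.le
        linarith
      · exact hsub ⟨h, lt_of_lt_of_le hy.2 (min_le_left u 1)⟩
    have hvle : v ≤ (volume S).toReal := by
      have h1 : (volume (Set.Ico (0:ℝ) v)).toReal ≤ (volume S).toReal :=
        ENNReal.toReal_mono hfin (measure_mono hsub')
      have h2 : (volume (Set.Ico (0:ℝ) v)).toReal = v := by
        rw [Real.volume_Ico, ENNReal.toReal_ofReal]
        · ring
        · linarith [ht.1]
      linarith
    linarith
  · intro h
    have hsub2 : S ⊆ Set.Ico (0:ℝ) t := by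
      intro y hy
      refine ⟨hy.1.1, ?_⟩
      by_contra hyt
      push_neg at hyt
      have : g t ≤ g y := hmono ht hy.1 hyt
      linarith [hy.2]
    have h1 : (volume S).toReal ≤ (volume (Set.Ico (0:ℝ) t)).toReal := by
      refine ENNReal.toReal_mono ?_ (measure_mono hsub2)
      simp [Real.volume_Ico]
    have h2 : (volume (Set.Ico (0:ℝ) t)).toReal = t := by
      rw [Real.volume_Ico, ENNReal.toReal_ofReal]
      · ring
      · linarith [ht.1]
    linarith
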